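/- There is a constant k_0 ∈ ℕ such that for every k ≥ k_0, every c ∈ [0,4], and d = 2k·ln k − ln k − c, the following holds w.h.p. for G = G(n,⌈dn/2⌉): there is no k-coloring σ of G such that the number of colors i ∈ {1,...,k} with | |σ^{-1}(i)| − n/k | > n/(k·(ln k)^4) exceeds (ln k)^8. -/

import Mathlib

set_option maxHeartbeats 2000000


open Filter

/-- Uniform counting probability on a finite sample space `Ω`. -/
noncomputable def prob {Ω : Type*} (p : Ω → Prop) : ℝ :=
  (Nat.card {x : Ω // p x} : ℝ) / (Nat.card Ω : ℝ)

/-- The sample space of the random graph `G(n,m)`. -/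
def GraphSpace (n m : ℕ) : Type :=
  {E : Finset (Sym2 (Fin n)) // E.card = m ∧ ∀ e ∈ E, ¬ e.IsDiag}

/-- `σ` is a proper `k`-coloring of the graph with edge set `E`. -/
def IsColoring {n k : ℕ} (E : Finset (Sym2 (Fin n))) (σ : Fin n → Fin k) : Prop :=
  ∀ u v : Fin n, s(u, v) ∈ E → σ u ≠ σ v

/-! ### Auxiliary material -/

open Finset

section Aux

lemma key_sub (F N m : ℕ) (h : F ≤ N) : (F - m) * N ≤ (N - m) * F := by
  rcases le_or_gt F m with hF | hF
  · simp [Nat.sub_eq_zero_of_le hF]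
  · have h1 : F * N - m * N ≤ N * F - m * F :=
      tsub_le_tsub (le_of_eq (mul_comm F N)) (Nat.mul_le_mul_left m h)
    simpa [Nat.sub_mul] using h1

lemma descFact_mul_pow_le (F N : ℕ) (h : F ≤ N) :
    ∀ m, F.descFactorial m * N^m ≤ N.descFactorial m * F^m := by
  intro m
  induction m with
  | zero => simp
  | succ m ih =>
    rw [Nat.descFactorial_succ, Nat.descFactorial_succ, pow_succ, pow_succ]
    calc (F - m) * F.descFactorial m * (N ^ m * N)
        = ((F - m) * N) * (F.descFactorial m * N ^ m) := by ring
      _ ≤ ((N - m) * F) * (N.descFactorial m * F ^ m) :=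
          Nat.mul_le_mul (key_sub F N m h) ih
      _ = (N - m) * N.descFactorial m * (F ^ m * F) := by ring

lemma choose_mul_pow_le (F N m : ℕ) (h : F ≤ N) :
    F.choose m * N^m ≤ N.choose m * F^m := by
  have h1 := descFact_mul_pow_le F N h m
  rw [Nat.descFactorial_eq_factorial_mul_choose, Nat.descFactorial_eq_factorial_mul_choose] at h1
  have h2 : Nat.factorial m * (F.choose m * N ^ m) ≤ Nat.factorial m * (N.choose m * F ^ m) := by
    simpa [mul_assoc] using h1
  exact Nat.le_of_mul_le_mul_left h2 (Nat.factorial_pos m)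

lemma choose_div_choose_le (F N m : ℕ) (hFN : F ≤ N) (hm : m ≤ N) :
    (F.choose m : ℝ) / (N.choose m : ℝ) ≤ ((F : ℝ) / N) ^ m := by
  rcases Nat.eq_zero_or_pos N with rfl | hN
  · interval_cases m
    simp
  have hNpos : (0:ℝ) < N := by exact_mod_cast hN
  have hch : (0:ℝ) < N.choose m := by exact_mod_cast Nat.choose_pos hm
  have h1 : (F.choose m : ℝ) * N ^ m ≤ (N.choose m : ℝ) * F ^ m := by
    exact_mod_cast choose_mul_pow_le F N m hFN
  rw [div_le_iff₀ hch, div_pow]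
  rw [div_mul_eq_mul_div, le_div_iff₀ (by positivity)]
  linarith [h1]

variable {n k : ℕ}

noncomputable def Bset (n k : ℕ) (σ : Fin n → Fin k) : Finset (Sym2 (Fin n)) :=
  by classical exact univ.filter (fun e => ¬ (e.map σ).IsDiag)

lemma cardA (σ : Fin n → Fin k) [DecidableEq (Fin k)] :
    (univ.filter fun p : Fin n × Fin n => σ p.1 ≠ σ p.2).card = 2 * (Bset n k σ).card := by
  classical
  rw [Finset.card_eq_sum_card_fiberwise (f := fun p : Fin n × Fin n => s(p.1, p.2))
      (t := Bset n k σ) ?_]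
  · rw [Finset.sum_congr rfl ?_, Finset.sum_const, smul_eq_mul, mul_comm]
    intro e he
    simp only [Bset, mem_filter, mem_univ, true_and] at he
    induction e with
    | _ a b =>
      have hab : σ a ≠ σ b := by
        simpa [Sym2.map_pair_eq, Sym2.mk_isDiag_iff] using he
      have hne : a ≠ b := fun h => hab (by rw [h])
      have : ((univ.filter fun p : Fin n × Fin n => σ p.1 ≠ σ p.2).filter
          fun p => s(p.1, p.2) = s(a, b)) = {(a, b), (b, a)} := by
        ext p
        simp only [mem_filter, mem_univ, true_and, mem_insert, mem_singleton, Sym2.eq_iff]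
        constructor
        · rintro ⟨_, (⟨h1, h2⟩ | ⟨h1, h2⟩)⟩
          · left; exact Prod.ext h1 h2
          · right; exact Prod.ext h1 h2
        · rintro (rfl | rfl)
          · exact ⟨hab, Or.inl ⟨rfl, rfl⟩⟩
          · exact ⟨fun h => hab h.symm, Or.inr ⟨rfl, rfl⟩⟩
      rw [this, card_insert_of_notMem (by simp [Prod.ext_iff, hne]), card_singleton]
  · rintro ⟨a, b⟩ hp
    simp only [Finset.mem_coe, mem_filter, mem_univ, true_and] at hp
    simp [Bset, Sym2.map_pair_eq, Sym2.mk_isDiag_iff, hp]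

lemma cardB (σ : Fin n → Fin k) [DecidableEq (Fin k)] :
    (univ.filter fun p : Fin n × Fin n => σ p.1 = σ p.2).card
      = ∑ i : Fin k, ((univ.filter fun v => σ v = i).card) ^ 2 := by
  classical
  rw [Finset.card_eq_sum_card_fiberwise (f := fun p : Fin n × Fin n => σ p.1)
      (t := univ) (fun p _ => mem_univ _)]
  refine Finset.sum_congr rfl fun i _ => ?_
  have : ((univ.filter fun p : Fin n × Fin n => σ p.1 = σ p.2).filter
      fun p => σ p.1 = i) = (univ.filter fun v => σ v = i) ×ˢ (univ.filter fun v => σ v = i) := by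
    ext ⟨a, b⟩
    simp only [mem_filter, mem_univ, true_and, mem_product]
    constructor
    · rintro ⟨h1, h2⟩; exact ⟨h2, h1 ▸ h2⟩
    · rintro ⟨h1, h2⟩; exact ⟨h1.trans h2.symm, h1⟩
  rw [this, card_product, sq]

lemma cardAB (σ : Fin n → Fin k) [DecidableEq (Fin k)] :
    2 * (Bset n k σ).card + ∑ i : Fin k, ((univ.filter fun v => σ v = i).card) ^ 2 = n ^ 2 := by
  classical
  rw [← cardA σ, ← cardB σ]
  have h := Finset.card_filter_add_card_filter_not
    (s := (univ : Finset (Fin n × Fin n))) (p := fun p => σ p.1 = σ p.2)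
  rw [Finset.card_univ, Fintype.card_prod, Fintype.card_fin, ← sq] at h
  rw [add_comm]
  convert h using 3

noncomputable def nd (n : ℕ) : Finset (Sym2 (Fin n)) :=
  by classical exact univ.filter (fun e => ¬ e.IsDiag)

lemma two_mul_nd_card (n : ℕ) : 2 * (nd n).card + n = n ^ 2 := by
  classical
  have h := cardAB (n := n) (k := n) id
  have h1 : Bset n n id = nd n := by
    ext e
    simp [Bset, nd, Sym2.map_id]
  have h2 : ∀ i : Fin n, (univ.filter fun v : Fin n => id v = i).card = 1 := by
    intro i
    have : (univ.filter fun v : Fin n => id v = i) = {i} := by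
      ext v; simp
    rw [this]; simp
  rw [h1] at h
  simp only [h2] at h
  simpa using h

lemma Bset_subset_nd (σ : Fin n → Fin k) : Bset n k σ ⊆ nd n := by
  classical
  intro e he
  simp only [Bset, mem_filter, mem_univ, true_and] at he
  simp only [nd, mem_filter, mem_univ, true_and]
  intro hd
  exact he (by induction e with
    | _ a b => simp only [Sym2.mk_isDiag_iff] at hd; simp [Sym2.map_pair_eq, hd])

lemma card_graphSpace (n m : ℕ) : Nat.card (GraphSpace n m) = ((nd n).card).choose m := by
  classical
  have e : GraphSpace n m ≃ {E // E ∈ (nd n).powersetCard m} := by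
    apply Equiv.subtypeEquivRight
    intro E
    rw [Finset.mem_powersetCard]
    constructor
    · rintro ⟨h1, h2⟩
      exact ⟨fun x hx => by simp [nd, h2 x hx], h1⟩
    · rintro ⟨h1, h2⟩
      refine ⟨h2, fun x hx => ?_⟩
      have := h1 hx
      simp only [nd, mem_filter] at this
      exact this.2
  rw [Nat.card_congr e, Nat.card_eq_finsetCard, Finset.card_powersetCard]

lemma card_coloring_le (n m : ℕ) (σ : Fin n → Fin k) :
    Nat.card {G : GraphSpace n m // IsColoring G.1 σ} ≤ ((Bset n k σ).card).choose m := by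
  classical
  have e : {G : GraphSpace n m // IsColoring G.1 σ} ≃
      {E // E ∈ (Bset n k σ).powersetCard m} := by
    refine ⟨fun G => ⟨G.1.1, ?_⟩, fun E => ⟨⟨E.1, ?_, ?_⟩, ?_⟩, ?_, ?_⟩
    · rw [Finset.mem_powersetCard]
      refine ⟨fun x hx => ?_, G.1.2.1⟩
      simp only [Bset, mem_filter, mem_univ, true_and]
      have hc := G.2
      induction x with
      | _ a b =>
        have : σ a ≠ σ b := hc a b hx
        simp [Sym2.map_pair_eq, Sym2.mk_isDiag_iff, this]
    · exact (Finset.mem_powersetCard.mp E.2).2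
    · intro x hx
      have hmem : x ∈ nd n := Bset_subset_nd σ ((Finset.mem_powersetCard.mp E.2).1 hx)
      simp only [nd, mem_filter] at hmem
      exact hmem.2
    · intro u v huv
      have := (Finset.mem_powersetCard.mp E.2).1 huv
      simp only [Bset, mem_filter, mem_univ, true_and, Sym2.map_pair_eq,
        Sym2.mk_isDiag_iff] at this
      exact this
    · intro G; rfl
    · intro E; rfl
  rw [Nat.card_congr e, Nat.card_eq_finsetCard, Finset.card_powersetCard]

noncomputable instance (n m : ℕ) : Fintype (GraphSpace n m) := by
  unfold GraphSpace
  classical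
  infer_instance

lemma natCard_subtype {α : Type*} [Fintype α] (p : α → Prop) [DecidablePred p] :
    Nat.card {x // p x} = (univ.filter p).card := by
  rw [Nat.card_eq_fintype_card, Fintype.card_subtype]

lemma card_exists_le {α ι : Type*} [Fintype α] [Fintype ι] (P : ι → α → Prop) :
    (Nat.card {x : α // ∃ i, P i x} : ℝ) ≤ ∑ i : ι, (Nat.card {x : α // P i x} : ℝ) := by
  classical
  simp only [natCard_subtype]
  have h1 : (univ.filter fun x => ∃ i, P i x) ⊆ univ.biUnion fun i => univ.filter (P i) := by
    intro x hx
    simp only [mem_filter, mem_univ, true_and] at hx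
    obtain ⟨i, hi⟩ := hx
    exact mem_biUnion.mpr ⟨i, mem_univ i, by simp [hi]⟩
  have h2 := le_trans (Finset.card_le_card h1) (Finset.card_biUnion_le)
  exact_mod_cast h2

lemma card_mono_subtype {α : Type*} [Fintype α] {p q : α → Prop} (h : ∀ x, p x → q x) :
    Nat.card {x // p x} ≤ Nat.card {x // q x} := by
  classical
  simp only [natCard_subtype]
  refine Finset.card_le_card (fun x hx => ?_)
  simp only [mem_filter, mem_univ, true_and] at *
  exact h x hx

lemma sum_fiber_card (n k : ℕ) (σ : Fin n → Fin k) [DecidableEq (Fin k)] :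
    ∑ i : Fin k, ((univ.filter fun v => σ v = i).card) = n := by
  classical
  have h := Finset.card_eq_sum_card_fiberwise (s := (univ : Finset (Fin n)))
    (t := (univ : Finset (Fin k))) (f := σ) (fun x _ => mem_univ _)
  rw [card_univ, Fintype.card_fin] at h
  exact h.symm

lemma sum_sq_ge (n k : ℕ) (σ : Fin n → Fin k) [DecidableEq (Fin k)] (hk : 2 ≤ k)
    (hbad : (Real.log k)^8 <
      ((univ.filter fun i : Fin k =>
        (n:ℝ)/(k * (Real.log k)^4) < |((univ.filter fun v => σ v = i).card : ℝ) - n/k|).card : ℝ)) :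
    (n:ℝ)^2 * (1/k + 1/k^2) ≤ ∑ i : Fin k, (((univ.filter fun v => σ v = i).card : ℝ))^2 := by
  classical
  set L := Real.log k with hLdef
  have hk0 : (0:ℝ) < k := by exact_mod_cast Nat.lt_of_lt_of_le Nat.zero_lt_two hk
  have hL0 : 0 < L := Real.log_pos (by exact_mod_cast hk)
  set a : Fin k → ℝ := fun i => ((univ.filter fun v => σ v = i).card : ℝ) with ha
  set t : ℝ := n / k with ht
  set δ : ℝ := (n:ℝ)/(k * L^4) with hδ
  have hδ0 : 0 ≤ δ := by positivity
  have hsum : ∑ i, a i = n := by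
    rw [ha]
    beta_reduce
    exact_mod_cast sum_fiber_card n k σ
  have hexp : ∑ i, (a i - t)^2 = (∑ i, (a i)^2) - (n:ℝ)^2/k := by
    have h1 : ∀ i ∈ (univ : Finset (Fin k)), (a i - t)^2 = (a i)^2 - 2*t*(a i) + t^2 :=
      fun i _ => by ring
    rw [Finset.sum_congr rfl h1, Finset.sum_add_distrib, Finset.sum_sub_distrib,
      ← Finset.mul_sum, hsum, Finset.sum_const, card_univ, Fintype.card_fin]
    rw [ht, nsmul_eq_mul]
    field_simp
    ring
  set T := univ.filter fun i : Fin k => δ < |a i - t| with hT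
  have hTlow : (T.card : ℝ) * δ^2 ≤ ∑ i ∈ T, (a i - t)^2 := by
    have := Finset.card_nsmul_le_sum T (fun i => (a i - t)^2) (δ^2)
      (fun i hi => by
        have hi' : δ < |a i - t| := (mem_filter.mp hi).2
        calc δ^2 ≤ |a i - t|^2 := by
              apply pow_le_pow_left₀ hδ0 hi'.le
          _ = (a i - t)^2 := sq_abs _)
    simpa [nsmul_eq_mul] using this
  have hsubset : ∑ i ∈ T, (a i - t)^2 ≤ ∑ i, (a i - t)^2 :=
    Finset.sum_le_sum_of_subset_of_nonneg (subset_univ T) (fun i _ _ => sq_nonneg _)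
  have hδsq : (L^8) * δ^2 = (n:ℝ)^2/k^2 := by
    rw [hδ]
    field_simp
  have hTge : (L^8) * δ^2 ≤ (T.card : ℝ) * δ^2 := by
    apply mul_le_mul_of_nonneg_right _ (by positivity)
    exact le_of_lt hbad
  have hkey : (n:ℝ)^2/k^2 ≤ (∑ i, (a i)^2) - (n:ℝ)^2/k := by
    rw [← hδsq, ← hexp]
    exact le_trans hTge (le_trans hTlow hsubset)
  calc (n:ℝ)^2 * (1/k + 1/k^2) = (n:ℝ)^2/k + (n:ℝ)^2/k^2 := by ring
    _ ≤ _ := by linarith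

lemma logk_ge (k : ℕ) (hk : 3^20 ≤ k) : 20 ≤ Real.log k := by
  have h3 : (1:ℝ) ≤ Real.log 3 := by
    rw [← Real.log_exp 1]
    apply Real.log_le_log (Real.exp_pos 1)
    linarith [Real.exp_one_lt_d9]
  calc (20:ℝ) = 20 * 1 := by ring
    _ ≤ 20 * Real.log 3 := by linarith
    _ = Real.log (3^20) := by rw [Real.log_pow]; push_cast; ring
    _ ≤ Real.log k := by
        apply Real.log_le_log (by positivity)
        exact_mod_cast hk

lemma analysis_main (K L c : ℝ) (hK : 3^20 ≤ K) (hL : 20 ≤ L) (hLK : L ≤ K)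
    (hc0 : 0 ≤ c) (hc4 : c ≤ 4) :
    L + (K * L - L/2 - c/2) * (-(1/K + 1/K^2 - 1/K^3)) ≤ -(1/K) := by
  have hK0 : (0:ℝ) < K := by positivity
  have hpoly : (L + (K * L - L/2 - c/2) * (-(1/K + 1/K^2 - 1/K^3))) * K^3 =
      -(L/2)*K^2 + (3*L/2)*K - L/2 + (c/2)*(K^2 + K - 1) := by
    field_simp
    ring
  have hineq : -(L/2)*K^2 + (3*L/2)*K - L/2 + (c/2)*(K^2 + K - 1) ≤ -(1/K) * K^3 := by
    have h1 : -(1/K) * K^3 = -K^2 := by field_simp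
    rw [h1]
    have hK1 : (1:ℝ) ≤ K := le_trans (by norm_num) hK
    nlinarith [mul_nonneg (mul_nonneg (by linarith : (0:ℝ) ≤ L - 20) hK0.le) hK0.le,
      mul_nonneg (by linarith : (0:ℝ) ≤ 4 - c) (by nlinarith : (0:ℝ) ≤ K^2 + K - 1),
      mul_nonneg (by linarith : (0:ℝ) ≤ K - L) hK0.le,
      mul_nonneg (by linarith : (0:ℝ) ≤ K - 1) hK0.le]
  have h2 := hpoly ▸ hineq
  exact le_of_mul_le_mul_right h2 (by positivity)

end Aux

section PerSigma
open Finset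

lemma ratio_real (K nR S F Nn : ℝ) (hK2 : 2 ≤ K) (hn : K^3 + 1 ≤ nR)
    (hS : nR^2*(1/K+1/K^2) ≤ S) (hF : 2*F = nR^2 - S) (hN : 2*Nn = nR^2 - nR) :
    F/Nn ≤ 1 - 1/K - 1/K^2 + 1/K^3 := by
  have hK0 : (0:ℝ) < K := by linarith
  have hn9 : (9:ℝ) ≤ nR := by nlinarith
  have hNpos : (0:ℝ) < Nn := by nlinarith
  rw [div_le_iff₀ hNpos]
  have key : nR^2*K^3 - nR^2*(K+1)*K ≤ (K^3-K^2-K+1)*(nR^2-nR) := by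
    nlinarith [mul_nonneg (by linarith : (0:ℝ) ≤ nR)
      (by nlinarith : (0:ℝ) ≤ nR - K^3 + K^2 + K - 1)]
  have e1 : nR^2 - nR^2*(1/K+1/K^2) = (nR^2*K^3 - nR^2*(K+1)*K)/K^3 := by
    field_simp
  have e2 : (1 - 1/K - 1/K^2 + 1/K^3)*(nR^2-nR) = ((K^3-K^2-K+1)*(nR^2-nR))/K^3 := by
    field_simp
  have h3 : nR^2 - nR^2*(1/K+1/K^2) ≤ (1 - 1/K - 1/K^2 + 1/K^3)*(nR^2-nR) := by
    rw [e1, e2]; gcongr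
  have hq : (1 - 1/K - 1/K^2 + 1/K^3)*(nR^2-nR) = 2*((1 - 1/K - 1/K^2 + 1/K^3)*Nn) := by
    rw [← hN]; ring
  linarith [h3, hS, hF, hq]

lemma per_sigma (n k m : ℕ) (σ : Fin n → Fin k) (hk2 : 2 ≤ k)
    (hn : (k:ℝ)^3 + 1 ≤ (n:ℝ)) (hm : m ≤ (nd n).card)
    (hbad : (Real.log k)^8 <
      (Nat.card {i : Fin k // (n:ℝ)/(k * Real.log k ^ 4) <
        |(Nat.card {v : Fin n // σ v = i} : ℝ) - n/k|} : ℝ)) :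
    (((Bset n k σ).card.choose m : ℝ)) ≤
      ((nd n).card.choose m : ℝ) * (1 - 1/(k:ℝ) - 1/(k:ℝ)^2 + 1/(k:ℝ)^3)^m := by
  classical
  have hK2 : (2:ℝ) ≤ (k:ℝ) := by exact_mod_cast hk2
  have hFNn : (Bset n k σ).card ≤ (nd n).card := Finset.card_le_card (Bset_subset_nd σ)
  have hNreal : 2*(((nd n).card:ℕ):ℝ) = (n:ℝ)^2 - n := by
    have h := two_mul_nd_card n
    have h2 : (2:ℝ) * ((nd n).card:ℝ) + (n:ℝ) = (n:ℝ)^2 := by exact_mod_cast h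
    linarith
  have hFreal : 2*(((Bset n k σ).card:ℕ):ℝ)
      = (n:ℝ)^2 - ∑ i : Fin k, (((univ.filter fun v => σ v = i).card : ℝ))^2 := by
    have h := cardAB σ
    have h2 : (2:ℝ) * ((Bset n k σ).card:ℝ)
        + ∑ i : Fin k, (((univ.filter fun v => σ v = i).card : ℝ))^2 = (n:ℝ)^2 := by
      exact_mod_cast h
    linarith
  have e1 : ∀ i : Fin k, ((Nat.card {v : Fin n // σ v = i} : ℕ) : ℝ)
      = (((univ.filter fun v => σ v = i).card : ℕ) : ℝ) := by
    intro i; rw [natCard_subtype]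
  have hbad' : (Real.log k)^8 <
      ((univ.filter fun i : Fin k =>
        (n:ℝ)/(k * (Real.log k)^4) < |((univ.filter fun v => σ v = i).card : ℝ) - n/k|).card : ℝ) := by
    rw [natCard_subtype] at hbad
    have e2 : (univ.filter fun i : Fin k => (n:ℝ)/(k * Real.log k ^ 4) <
          |(Nat.card {v : Fin n // σ v = i} : ℝ) - n/k|)
        = (univ.filter fun i : Fin k =>
          (n:ℝ)/(k * (Real.log k)^4) < |((univ.filter fun v => σ v = i).card : ℝ) - n/k|) := by
      apply Finset.filter_congr
      intro i _
      rw [e1 i]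
    rw [e2] at hbad
    exact hbad
  have hS := sum_sq_ge n k σ hk2 hbad'
  have hratio : (((Bset n k σ).card:ℕ):ℝ)/(((nd n).card:ℕ):ℝ)
      ≤ 1 - 1/(k:ℝ) - 1/(k:ℝ)^2 + 1/(k:ℝ)^3 :=
    ratio_real (k:ℝ) (n:ℝ) _ _ _ hK2 hn hS hFreal hNreal
  have hn9 : (9:ℝ) ≤ (n:ℝ) := by nlinarith
  have hNpos : (0:ℝ) < (((nd n).card:ℕ):ℝ) := by
    nlinarith [hNreal, hn9, mul_nonneg (by linarith : (0:ℝ) ≤ (n:ℝ) - 9) (by linarith : (0:ℝ) ≤ (n:ℝ))]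
  have hchpos : (0:ℝ) < ((nd n).card.choose m : ℝ) := by exact_mod_cast Nat.choose_pos hm
  have hq0 : 0 ≤ (((Bset n k σ).card:ℕ):ℝ)/(((nd n).card:ℕ):ℝ) := by positivity
  have h5 := choose_div_choose_le (Bset n k σ).card (nd n).card m hFNn hm
  have h6 := pow_le_pow_left₀ hq0 hratio m
  rw [div_le_iff₀ hchpos] at h5
  calc (((Bset n k σ).card.choose m : ℕ) : ℝ)
      ≤ ((((Bset n k σ).card:ℕ):ℝ)/(((nd n).card:ℕ):ℝ))^m * ((nd n).card.choose m : ℝ) := h5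
    _ ≤ (1 - 1/(k:ℝ) - 1/(k:ℝ)^2 + 1/(k:ℝ)^3)^m * ((nd n).card.choose m : ℝ) := by
        exact mul_le_mul_of_nonneg_right h6 hchpos.le
    _ = ((nd n).card.choose m : ℝ) * (1 - 1/(k:ℝ) - 1/(k:ℝ)^2 + 1/(k:ℝ)^3)^m := by ring

end PerSigma

theorem statement5 :
    ∃ k₀ : ℕ, ∀ k : ℕ, k₀ ≤ k → ∀ c : ℝ, 0 ≤ c → c ≤ 4 →
      ∀ d : ℝ, d = 2 * k * Real.log k - Real.log k - c →
      Tendsto (fun n : ℕ =>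
          prob (fun G : GraphSpace n ⌈d * n / 2⌉₊ =>
            ¬ ∃ σ : Fin n → Fin k, IsColoring G.1 σ ∧
              Real.log k ^ (8 : ℕ) <
                (Nat.card {i : Fin k //
                    n / (k * Real.log k ^ (4 : ℕ)) <
                      |(Nat.card {v : Fin n // σ v = i} : ℝ) - n / k|} : ℝ)))
        atTop (nhds 1) := by
  classical
  refine ⟨3^20, fun k hk c hc0 hc4 d hd => ?_⟩
  have hk2 : 2 ≤ k := le_trans (by norm_num) hk
  have hK320 : (3:ℝ)^20 ≤ (k:ℝ) := by exact_mod_cast hk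
  have hK2 : (2:ℝ) ≤ (k:ℝ) := by exact_mod_cast hk2
  have hK0 : (0:ℝ) < (k:ℝ) := by linarith
  have hL20 : 20 ≤ Real.log k := logk_ge k hk
  have hL0 : (0:ℝ) < Real.log k := by linarith
  have hLK : Real.log k ≤ (k:ℝ) := by
    have := Real.log_le_sub_one_of_pos hK0
    linarith
  set L : ℝ := Real.log k with hLdef
  set q : ℝ := 1 - 1/(k:ℝ) - 1/(k:ℝ)^2 + 1/(k:ℝ)^3 with hqdef
  have hq0 : 0 < q := by
    have hnum : (0:ℝ) < (k:ℝ)^3 - (k:ℝ)^2 - k + 1 := by nlinarith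
    have he : q = ((k:ℝ)^3 - (k:ℝ)^2 - k + 1)/(k:ℝ)^3 := by
      rw [hqdef]; field_simp
    rw [he]; positivity
  have hq1 : q < 1 := by
    have h23 : 1/(k:ℝ)^3 ≤ 1/(k:ℝ)^2 := by
      apply one_div_le_one_div_of_le (by positivity) (by nlinarith)
    have h1k : 0 < 1/(k:ℝ) := by positivity
    rw [hqdef]; linarith
  have hlogq : Real.log q < 0 := Real.log_neg hq0 hq1
  have hd0 : 0 < d := by
    have hKL : 20*(k:ℝ) ≤ (k:ℝ)*L := by nlinarith
    rw [hd]; nlinarith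
  have hexp_neg : L + d/2 * Real.log q ≤ -(1/(k:ℝ)) := by
    have h1 : Real.log q ≤ q - 1 := Real.log_le_sub_one_of_pos hq0
    have h2 : d/2 * Real.log q ≤ d/2 * (q - 1) :=
      mul_le_mul_of_nonneg_left h1 (by linarith)
    have h3 : L + d/2 * (q - 1)
        = L + ((k:ℝ)*L - L/2 - c/2) * (-(1/(k:ℝ) + 1/(k:ℝ)^2 - 1/(k:ℝ)^3)) := by
      rw [hqdef, hd]; push_cast; ring
    have h4 := analysis_main (k:ℝ) L c hK320 hL20 hLK hc0 hc4
    linarith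
  set r : ℝ := Real.exp (L + d/2 * Real.log q) with hrdef
  have hr0 : 0 < r := Real.exp_pos _
  have hr1 : r < 1 := by
    rw [hrdef, Real.exp_lt_one_iff]
    have h1k : 0 < 1/(k:ℝ) := by positivity
    linarith
  apply tendsto_of_tendsto_of_tendsto_of_le_of_le' (g := fun n : ℕ => 1 - r^n)
    (h := fun _ : ℕ => (1:ℝ))
  · have := (tendsto_pow_atTop_nhds_zero_of_lt_one hr0.le hr1).const_sub 1
    simpa using this
  · exact tendsto_const_nhds
  · -- lower bound, eventually
    filter_upwards [eventually_ge_atTop (k^4)] with n hn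
    set m : ℕ := ⌈d * n / 2⌉₊ with hmdef
    have hnR : ((k:ℝ)^4 ≤ (n:ℝ)) := by exact_mod_cast hn
    have hn3 : (k:ℝ)^3 + 1 ≤ (n:ℝ) := by nlinarith
    have hn1 : (1:ℝ) ≤ (n:ℝ) := by nlinarith
    have hNn2 : 2*(((nd n).card:ℕ):ℝ) = (n:ℝ)^2 - n := by
      have h := two_mul_nd_card n
      have h2 : (2:ℝ) * ((nd n).card:ℝ) + (n:ℝ) = (n:ℝ)^2 := by exact_mod_cast h
      linarith
    have hdn0 : 0 ≤ d * (n:ℝ) / 2 := by positivity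
    have hmdn : d * (n:ℝ)/2 ≤ (m:ℝ) := Nat.le_ceil _
    have hm_up : (m:ℝ) < d * (n:ℝ)/2 + 1 := Nat.ceil_lt_add_one hdn0
    have hd_le : d ≤ 2*(k:ℝ)^2 := by
      have h1 : (k:ℝ)*L ≤ (k:ℝ)*(k:ℝ) := mul_le_mul_of_nonneg_left hLK hK0.le
      rw [hd]; nlinarith
    have hx4 : (4:ℝ) ≤ (k:ℝ)^2 := by nlinarith
    have hk43 : (0:ℝ) ≤ (k:ℝ)^4 - 2*(k:ℝ)^2 - 3 := by
      nlinarith [mul_nonneg (by linarith : (0:ℝ) ≤ (k:ℝ)^2 - 3)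
        (by positivity : (0:ℝ) ≤ (k:ℝ)^2 + 1)]
    have hmN : m ≤ (nd n).card := by
      have hreal : (m:ℝ) ≤ ((nd n).card:ℝ) := by
        have h1 : (m:ℝ) < (k:ℝ)^2 * n + 1 := by nlinarith
        have h2 : (k:ℝ)^2 * n + 1 ≤ ((n:ℝ)^2 - n)/2 := by
          nlinarith [mul_nonneg (by linarith : (0:ℝ) ≤ (n:ℝ) - (k:ℝ)^4) (by linarith : (0:ℝ) ≤ (n:ℝ)),
            mul_nonneg hk43 (by linarith : (0:ℝ) ≤ (n:ℝ))]
        linarith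
      exact_mod_cast hreal
    have hchpos : (0:ℝ) < (((nd n).card.choose m : ℕ) : ℝ) := by
      exact_mod_cast Nat.choose_pos hmN
    -- abbreviation for the event
    set P : (Fin n → Fin k) → GraphSpace n m → Prop := fun σ G =>
      IsColoring G.1 σ ∧
        Real.log k ^ (8 : ℕ) <
          (Nat.card {i : Fin k //
              (n:ℝ) / (k * Real.log k ^ (4 : ℕ)) <
                |(Nat.card {v : Fin n // σ v = i} : ℝ) - (n:ℝ) / k|} : ℝ) with hPdef
    -- per-sigma bound
    have hper : ∀ σ : Fin n → Fin k,
        (Nat.card {G : GraphSpace n m // P σ G} : ℝ)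
          ≤ (((nd n).card.choose m : ℕ) : ℝ) * q^m := by
      intro σ
      by_cases hb : Real.log k ^ (8 : ℕ) <
          (Nat.card {i : Fin k //
              (n:ℝ) / (k * Real.log k ^ (4 : ℕ)) <
                |(Nat.card {v : Fin n // σ v = i} : ℝ) - (n:ℝ) / k|} : ℝ)
      · have h1 : Nat.card {G : GraphSpace n m // P σ G}
            ≤ Nat.card {G : GraphSpace n m // IsColoring G.1 σ} :=
          card_mono_subtype (fun G hG => hG.1)
        have h2 := card_coloring_le (k := k) n m σ
        have h3 := per_sigma n k m σ hk2 hn3 hmN hb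
        have h12 : (Nat.card {G : GraphSpace n m // P σ G} : ℝ)
            ≤ (((Bset n k σ).card.choose m : ℕ) : ℝ) := by
          exact_mod_cast le_trans h1 h2
        rw [hqdef]
        exact le_trans h12 h3
      · have hempty : IsEmpty {G : GraphSpace n m // P σ G} := ⟨fun G => hb G.2.2⟩
        rw [Nat.card_of_isEmpty, Nat.cast_zero]
        exact mul_nonneg (by positivity) (pow_nonneg hq0.le m)
    -- union bound
    have hA : (Nat.card {G : GraphSpace n m // ∃ σ, P σ G} : ℝ)
        ≤ ((k:ℝ)^n) * ((((nd n).card.choose m : ℕ) : ℝ) * q^m) := by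
      calc (Nat.card {G : GraphSpace n m // ∃ σ, P σ G} : ℝ)
          ≤ ∑ σ : Fin n → Fin k, (Nat.card {G : GraphSpace n m // P σ G} : ℝ) :=
            card_exists_le P
        _ ≤ ∑ _σ : Fin n → Fin k, (((nd n).card.choose m : ℕ) : ℝ) * q^m :=
            Finset.sum_le_sum (fun σ _ => hper σ)
        _ = (Fintype.card (Fin n → Fin k) : ℝ) * ((((nd n).card.choose m : ℕ) : ℝ) * q^m) := by
            rw [Finset.sum_const, Finset.card_univ, nsmul_eq_mul]
        _ = ((k:ℝ)^n) * ((((nd n).card.choose m : ℕ) : ℝ) * q^m) := by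
            rw [Fintype.card_fun, Fintype.card_fin, Fintype.card_fin]
            push_cast; ring
    -- probability identity
    have hcard : Nat.card (GraphSpace n m) = ((nd n).card).choose m := card_graphSpace n m
    have hAle : Nat.card {G : GraphSpace n m // ∃ σ, P σ G} ≤ Nat.card (GraphSpace n m) := by
      rw [Nat.card_eq_fintype_card, Nat.card_eq_fintype_card]
      exact Fintype.card_subtype_le _
    have hcompl : Nat.card {G : GraphSpace n m // ¬ ∃ σ, P σ G}
        = Nat.card (GraphSpace n m) - Nat.card {G : GraphSpace n m // ∃ σ, P σ G} := by
      rw [Nat.card_eq_fintype_card, Nat.card_eq_fintype_card, Nat.card_eq_fintype_card]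
      exact Fintype.card_subtype_compl _
    have hprob : prob (fun G : GraphSpace n m => ¬ ∃ σ, P σ G)
        = 1 - (Nat.card {G : GraphSpace n m // ∃ σ, P σ G} : ℝ)
            / (((nd n).card.choose m : ℕ) : ℝ) := by
      unfold prob
      rw [hcompl, Nat.cast_sub hAle, hcard, sub_div, div_self (ne_of_gt hchpos)]
    -- the exponential bound
    have hqm_exp : q^m = Real.exp ((m:ℝ) * Real.log q) := by
      rw [← Real.log_pow, Real.exp_log (pow_pos hq0 m)]
    have hkn_exp : (k:ℝ)^n = Real.exp ((n:ℝ) * L) := by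
      rw [hLdef, ← Real.log_pow, Real.exp_log (pow_pos hK0 n)]
    have hbound : ((k:ℝ)^n) * q^m ≤ r^n := by
      rw [hqm_exp, hkn_exp, ← Real.exp_add, hrdef, ← Real.exp_nat_mul]
      apply Real.exp_le_exp.mpr
      have h1 : (m:ℝ) * Real.log q ≤ (d * (n:ℝ)/2) * Real.log q :=
        mul_le_mul_of_nonpos_right hmdn hlogq.le
      have h2 : (n:ℝ) * L + (d * (n:ℝ)/2) * Real.log q
          = (n:ℝ) * (L + d/2 * Real.log q) := by ring
      linarith
    -- final comparison
    rw [hprob]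
    have hdivle : (Nat.card {G : GraphSpace n m // ∃ σ, P σ G} : ℝ)
        / (((nd n).card.choose m : ℕ) : ℝ) ≤ ((k:ℝ)^n) * q^m := by
      rw [div_le_iff₀ hchpos]
      calc (Nat.card {G : GraphSpace n m // ∃ σ, P σ G} : ℝ)
          ≤ ((k:ℝ)^n) * ((((nd n).card.choose m : ℕ) : ℝ) * q^m) := hA
        _ = ((k:ℝ)^n) * q^m * (((nd n).card.choose m : ℕ) : ℝ) := by ring
    linarith [le_trans hdivle hbound]
  · -- upper bound: prob ≤ 1 always
    apply Filter.Eventually.of_forall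
    intro n
    unfold prob
    apply div_le_one_of_le₀
    · apply Nat.cast_le.mpr
      rw [Nat.card_eq_fintype_card, Nat.card_eq_fintype_card]
      exact Fintype.card_subtype_le _
    · positivity
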